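/- (Value bound, second inequality) Let X, A, S be finite nonempty sets, P : X × A → (X → ℝ) a transition kernel, r : X × A → ℝ, γ ∈ (0,1), and T the Bellman optimality operator of this MDP. Let φ : X → S be surjective, and let (S, A, P_φ, R_φ, γ) be an abstract MDP with kernel P_φ : S × A → (S → ℝ) and reward R_φ : S × A → ℝ satisfying 0 ≤ R_φ(s, a) ≤ R_max for all s, a. Let Q*_φ : S × A → ℝ be a fixed point of the abstract Bellman optimality operator (T_φ Q)(s, a) = R_φ(s, a) + γ Σ_{s'} P_φ(s' | s, a) max_{a'} Q(s', a'), and let the lift be [Q*_φ]_M(x, a) = Q*_φ(φ(x), a). Assume: (i) |R_φ(φ(x), a) − r(x, a)| ≤ ε_R for all x, a; and (ii) Σ_{s' ∈ S} |P_φ(s' | φ(x), a) − Σ_{x' ∈ φ^{-1}(s')} P(x' | x, a)| ≤ ε_P for all x, a. Then for all x ∈ X, a ∈ A, |[Q*_φ]_M(x, a) − (T [Q*_φ]_M)(x, a)| ≤ ε_R + γ · ε_P · R_max / (2(1 − γ)); in particular, for any probability distribution μ on X × A, ‖[Q*_φ]_M − T [Q*_φ]_M‖_{2,μ} ≤ ε_R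 + γ · ε_P · R_max / (2(1 − γ)). -/

import Mathlib

/-- The Bellman optimality operator of a finite MDP:
`(TQ)(x, a) = r(x, a) + γ Σ_{x'} P(x' | x, a) max_{a'} Q(x', a')`. -/
def bellmanOpt {X A : Type} [Fintype X] [Fintype A] [Nonempty A]
    (P : X → A → X → ℝ) (r : X → A → ℝ) (γ : ℝ) (Q : X → A → ℝ) : X → A → ℝ :=
  fun x a => r x a + γ * ∑ x', P x a x' *
    Finset.univ.sup' Finset.univ_nonempty (fun a' => Q x' a')

/-- The weighted 2-norm `‖f‖_{2,μ} = (Σ_{(x,a)} μ(x,a) f(x,a)²)^{1/2}`. -/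
noncomputable def norm2 {X A : Type} [Fintype X] [Fintype A]
    (μ : X × A → ℝ) (f : X → A → ℝ) : ℝ :=
  Real.sqrt (∑ p : X × A, μ p * (f p.1 p.2) ^ 2)

/-- Value bound, second inequality: the lift of the abstract optimal value
function has Bellman residual at most `ε_R + γ ε_P R_max / (2(1−γ))`, pointwise and hence
in any weighted 2-norm. -/
theorem value_bound_second_inequality
    (X A S : Type) [Fintype X] [Fintype A] [Fintype S]
    [Nonempty X] [Nonempty A] [Nonempty S] [DecidableEq S]
    (P : X → A → X → ℝ)
    (hP_nonneg : ∀ x a x', 0 ≤ P x a x')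
    (hP_sum : ∀ x a, ∑ x', P x a x' = 1)
    (r : X → A → ℝ) (γ : ℝ) (hγ0 : 0 < γ) (hγ1 : γ < 1)
    (φ : X → S) (hφ_surj : Function.Surjective φ)
    (Pφ : S → A → S → ℝ)
    (hPφ_nonneg : ∀ s a s', 0 ≤ Pφ s a s')
    (hPφ_sum : ∀ s a, ∑ s', Pφ s a s' = 1)
    (Rφ : S → A → ℝ) (Rmax : ℝ)
    (hRφ : ∀ s a, 0 ≤ Rφ s a ∧ Rφ s a ≤ Rmax)
    (Qφ : S → A → ℝ)
    (hQφ : ∀ s a, Qφ s a = bellmanOpt Pφ Rφ γ Qφ s a)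
    (εR εP : ℝ)
    (hreward : ∀ x a, |Rφ (φ x) a - r x a| ≤ εR)
    (htrans : ∀ x a, ∑ s', |Pφ (φ x) a s'
        - ∑ x' ∈ Finset.univ.filter (fun x' => φ x' = s'), P x a x'| ≤ εP) :
    (∀ x a, |Qφ (φ x) a - bellmanOpt P r γ (fun x a => Qφ (φ x) a) x a|
        ≤ εR + γ * εP * Rmax / (2 * (1 - γ))) ∧
    (∀ μ : X × A → ℝ, (∀ p, 0 ≤ μ p) → (∑ p, μ p = 1) →
      norm2 μ (fun x a => Qφ (φ x) a - bellmanOpt P r γ (fun x a => Qφ (φ x) a) x a)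
        ≤ εR + γ * εP * Rmax / (2 * (1 - γ))) := by

  classical
  have h1γ : (0:ℝ) < 1 - γ := by linarith
  obtain ⟨s0⟩ := ‹Nonempty S›
  obtain ⟨a0⟩ := ‹Nonempty A›
  obtain ⟨x0⟩ := ‹Nonempty X›
  have hRmax : 0 ≤ Rmax := le_trans (hRφ s0 a0).1 (hRφ s0 a0).2
  have hεP : 0 ≤ εP :=
    le_trans (Finset.sum_nonneg fun _ _ => abs_nonneg _) (htrans x0 a0)
  have hεR : 0 ≤ εR := le_trans (abs_nonneg _) (hreward x0 a0)
  set c : ℝ := Rmax / (2 * (1 - γ)) with hc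
  have hc0 : 0 ≤ c := by positivity
  set V : S → ℝ := fun s => Finset.univ.sup' Finset.univ_nonempty (fun a' => Qφ s a') with hV
  -- bounds on Qφ
  obtain ⟨pM, -, hpM⟩ := Finset.exists_max_image Finset.univ
    (fun p : S × A => Qφ p.1 p.2) ⟨(s0, a0), Finset.mem_univ _⟩
  obtain ⟨pm, -, hpm⟩ := Finset.exists_min_image Finset.univ
    (fun p : S × A => Qφ p.1 p.2) ⟨(s0, a0), Finset.mem_univ _⟩
  set M : ℝ := Qφ pM.1 pM.2 with hMdef
  set m : ℝ := Qφ pm.1 pm.2 with hmdef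
  have hVub : ∀ s, V s ≤ M := fun s =>
    Finset.sup'_le _ _ fun a' _ => hpM (s, a') (Finset.mem_univ _)
  have hVlb : ∀ s, m ≤ V s := fun s =>
    le_trans (hpm (s, pm.2) (Finset.mem_univ _))
      (Finset.le_sup' (fun a' => Qφ s a') (Finset.mem_univ pm.2))
  have hPV_ub : ∀ s a, ∑ s', Pφ s a s' * V s' ≤ M := by
    intro s a
    calc ∑ s', Pφ s a s' * V s' ≤ ∑ s', Pφ s a s' * M :=
          Finset.sum_le_sum fun s' _ =>
            mul_le_mul_of_nonneg_left (hVub s') (hPφ_nonneg s a s')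
      _ = M := by rw [← Finset.sum_mul, hPφ_sum, one_mul]
  have hPV_lb : ∀ s a, m ≤ ∑ s', Pφ s a s' * V s' := by
    intro s a
    calc m = ∑ s', Pφ s a s' * m := by rw [← Finset.sum_mul, hPφ_sum, one_mul]
      _ ≤ ∑ s', Pφ s a s' * V s' :=
          Finset.sum_le_sum fun s' _ =>
            mul_le_mul_of_nonneg_left (hVlb s') (hPφ_nonneg s a s')
  have hM : M ≤ Rmax / (1 - γ) := by
    have h := hQφ pM.1 pM.2
    rw [bellmanOpt] at h
    have h2 : M ≤ Rmax + γ * M := by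
      rw [hMdef, h]
      have := hPV_ub pM.1 pM.2
      have := (hRφ pM.1 pM.2).2
      nlinarith
    rw [le_div_iff₀ h1γ]; nlinarith
  have hm : 0 ≤ m := by
    have h := hQφ pm.1 pm.2
    rw [bellmanOpt] at h
    have h2 : γ * m ≤ m := by
      rw [hmdef, h]
      have := hPV_lb pm.1 pm.2
      have := (hRφ pm.1 pm.2).1
      nlinarith
    nlinarith
  have hVabs : ∀ s, |V s - c| ≤ c := by
    intro s
    rw [abs_le]
    have h1 : 0 ≤ V s := le_trans hm (hVlb s)
    have h2 : V s ≤ Rmax / (1 - γ) := le_trans (hVub s) hM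
    constructor
    · linarith
    · have h2c : 2 * c = Rmax / (1 - γ) := by rw [hc]; field_simp
      linarith
  -- pointwise bound
  have hpt : ∀ x a, |Qφ (φ x) a - bellmanOpt P r γ (fun x a => Qφ (φ x) a) x a|
      ≤ εR + γ * εP * Rmax / (2 * (1 - γ)) := by
    intro x a
    have hlift : ∀ x', (Finset.univ.sup' Finset.univ_nonempty
        (fun a' => Qφ (φ x') a')) = V (φ x') := fun x' => rfl
    have hsum : ∑ x', P x a x' * V (φ x')
        = ∑ s', (∑ x' ∈ Finset.univ.filter (fun x' => φ x' = s'), P x a x') * V s' := by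
      rw [← Finset.sum_fiberwise Finset.univ φ (fun x' => P x a x' * V (φ x'))]
      refine Finset.sum_congr rfl fun s' _ => ?_
      rw [Finset.sum_mul]
      refine Finset.sum_congr rfl fun x' hx' => ?_
      rw [(Finset.mem_filter.mp hx').2]
    set Δ : S → ℝ := fun s' => Pφ (φ x) a s'
        - ∑ x' ∈ Finset.univ.filter (fun x' => φ x' = s'), P x a x' with hΔ
    have hΔsum : ∑ s', Δ s' = 0 := by
      rw [hΔ]
      simp only [Finset.sum_sub_distrib]
      rw [hPφ_sum, Finset.sum_fiberwise Finset.univ φ (fun x' => P x a x'), hP_sum]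
      ring
    have key : Qφ (φ x) a - bellmanOpt P r γ (fun x a => Qφ (φ x) a) x a
        = (Rφ (φ x) a - r x a) + γ * ∑ s', Δ s' * (V s' - c) := by
      rw [hQφ (φ x) a]
      simp only [bellmanOpt]
      have : ∑ s', Δ s' * (V s' - c)
          = ∑ s', Δ s' * V s' - (∑ s', Δ s') * c := by
        rw [Finset.sum_mul]
        rw [← Finset.sum_sub_distrib]
        refine Finset.sum_congr rfl fun s' _ => ?_; ring
      rw [this, hΔsum, zero_mul, sub_zero]
      simp only [hlift]
      rw [hsum]
      rw [hΔ]
      simp only [Finset.sum_sub_distrib, sub_mul]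
      ring
    rw [key]
    have hbd : |∑ s', Δ s' * (V s' - c)| ≤ εP * c := by
      calc |∑ s', Δ s' * (V s' - c)| ≤ ∑ s', |Δ s' * (V s' - c)| :=
            Finset.abs_sum_le_sum_abs _ _
        _ = ∑ s', |Δ s'| * |V s' - c| := by
            refine Finset.sum_congr rfl fun s' _ => abs_mul _ _
        _ ≤ ∑ s', |Δ s'| * c :=
            Finset.sum_le_sum fun s' _ =>
              mul_le_mul_of_nonneg_left (hVabs s') (abs_nonneg _)
        _ = (∑ s', |Δ s'|) * c := by rw [Finset.sum_mul]
        _ ≤ εP * c := mul_le_mul_of_nonneg_right (htrans x a) hc0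
    have heq : εR + γ * εP * Rmax / (2 * (1 - γ)) = εR + γ * (εP * c) := by
      rw [hc]; field_simp
    rw [heq]
    calc |(Rφ (φ x) a - r x a) + γ * ∑ s', Δ s' * (V s' - c)|
        ≤ |Rφ (φ x) a - r x a| + |γ * ∑ s', Δ s' * (V s' - c)| := abs_add_le _ _
      _ ≤ εR + γ * (εP * c) := by
          refine add_le_add (hreward x a) ?_
          rw [abs_mul, abs_of_pos hγ0]
          exact mul_le_mul_of_nonneg_left hbd (le_of_lt hγ0)
  refine ⟨hpt, ?_⟩
  intro μ hμ0 hμ1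
  have hX : 0 ≤ γ * εP * Rmax / (2 * (1 - γ)) := by positivity
  have hB0 : 0 ≤ εR + γ * εP * Rmax / (2 * (1 - γ)) := by linarith
  rw [norm2]
  have hsum : ∑ p : X × A, μ p * (Qφ (φ p.1) p.2
      - bellmanOpt P r γ (fun x a => Qφ (φ x) a) p.1 p.2) ^ 2 ≤ (εR + γ * εP * Rmax / (2 * (1 - γ))) ^ 2 := by
    calc ∑ p : X × A, μ p * (Qφ (φ p.1) p.2
          - bellmanOpt P r γ (fun x a => Qφ (φ x) a) p.1 p.2) ^ 2
        ≤ ∑ p : X × A, μ p * (εR + γ * εP * Rmax / (2 * (1 - γ))) ^ 2 := by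
          refine Finset.sum_le_sum fun p _ => ?_
          refine mul_le_mul_of_nonneg_left ?_ (hμ0 p)
          have := hpt p.1 p.2
          calc (Qφ (φ p.1) p.2 - bellmanOpt P r γ (fun x a => Qφ (φ x) a) p.1 p.2) ^ 2
              = |Qφ (φ p.1) p.2 - bellmanOpt P r γ (fun x a => Qφ (φ x) a) p.1 p.2| ^ 2 := (sq_abs _).symm
            _ ≤ (εR + γ * εP * Rmax / (2 * (1 - γ))) ^ 2 := by
                refine pow_le_pow_left₀ (abs_nonneg _) this 2
      _ = (εR + γ * εP * Rmax / (2 * (1 - γ))) ^ 2 := by rw [← Finset.sum_mul, hμ1, one_mul]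
  calc Real.sqrt (∑ p : X × A, μ p * (Qφ (φ p.1) p.2
        - bellmanOpt P r γ (fun x a => Qφ (φ x) a) p.1 p.2) ^ 2)
      ≤ Real.sqrt ((εR + γ * εP * Rmax / (2 * (1 - γ))) ^ 2) := Real.sqrt_le_sqrt hsum
    _ = _ := Real.sqrt_sq hB0
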